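/- Let ρ₁ ∈ (0,1), ρ₂ = √(1−ρ₁²), H = (ρ₁²−ρ₂²)/(ρ₁ρ₂). Then E₂(Σ_{ρ₁}) = (1/3 + (2/27)H²)(ρ₁² − ρ₂²)(2π)², and E₂(Σ_{ρ₁}) → +∞ as ρ₁ → 1⁻ and E₂(Σ_{ρ₁}) → −∞ as ρ₁ → 0⁺. -/

import Mathlib

open Filter

/-- For `Σ_{ρ₁} ⊂ S³` with `ρ₂ = √(1-ρ₁²)` and `H = (ρ₁²-ρ₂²)/(ρ₁ρ₂)`,
the second CR energy `E₂(Σ_{ρ₁}) = ∫((1/6)WH + (2/27)H³) ρ₁ρ₂ dφ₁dφ₂`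
(with `W = 2`) equals `(1/3 + (2/27)H²)(ρ₁² - ρ₂²)(2π)²`, and it tends to
`+∞` as `ρ₁ → 1⁻` and to `-∞` as `ρ₁ → 0⁺`. -/
theorem stmt18 (E₂ ρ₂ H : ℝ → ℝ)
    (hρ₂ : ∀ ρ₁, ρ₂ ρ₁ = Real.sqrt (1 - ρ₁^2))
    (hH : ∀ ρ₁, H ρ₁ = (ρ₁^2 - (ρ₂ ρ₁)^2) / (ρ₁ * ρ₂ ρ₁))
    (hE₂ : ∀ ρ₁, E₂ ρ₁ =
      ∫ _φ₁ in (0:ℝ)..(2*Real.pi), ∫ _φ₂ in (0:ℝ)..(2*Real.pi),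
        ((1/6)*2*(H ρ₁) + (2/27)*(H ρ₁)^3) * (ρ₁ * ρ₂ ρ₁)) :
    (∀ ρ₁ ∈ Set.Ioo (0:ℝ) 1,
      E₂ ρ₁ = (1/3 + (2/27)*(H ρ₁)^2) * (ρ₁^2 - (ρ₂ ρ₁)^2) * (2*Real.pi)^2)
    ∧ Tendsto E₂ (nhdsWithin 1 (Set.Iio 1)) atTop
    ∧ Tendsto E₂ (nhdsWithin 0 (Set.Ioi 0)) atBot := by
  have hπ : (0:ℝ) < Real.pi := Real.pi_pos
  have hρ₂pos : ∀ ρ₁ ∈ Set.Ioo (0:ℝ) 1, 0 < ρ₂ ρ₁ := by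
    intro ρ₁ h
    rw [hρ₂]
    apply Real.sqrt_pos.2
    nlinarith [h.1, h.2]
  have hρ₂sq : ∀ ρ₁ ∈ Set.Ioo (0:ℝ) 1, (ρ₂ ρ₁)^2 = 1 - ρ₁^2 := by
    intro ρ₁ h
    rw [hρ₂, Real.sq_sqrt]
    nlinarith [h.1, h.2]
  have hform : ∀ ρ₁ ∈ Set.Ioo (0:ℝ) 1,
      E₂ ρ₁ = (1/3 + (2/27)*(H ρ₁)^2) * (ρ₁^2 - (ρ₂ ρ₁)^2) * (2*Real.pi)^2 := by
    intro ρ₁ h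
    have h2 := hρ₂pos ρ₁ h
    rw [hE₂]
    simp only [intervalIntegral.integral_const, smul_eq_mul, sub_zero]
    rw [hH]
    have hne : ρ₁ * ρ₂ ρ₁ ≠ 0 := mul_ne_zero (ne_of_gt h.1) (ne_of_gt h2)
    have hne1' : ρ₁ ≠ 0 := ne_of_gt h.1
    have hne2' : ρ₂ ρ₁ ≠ 0 := ne_of_gt h2
    field_simp
    ring
  have hform2 : ∀ ρ₁ ∈ Set.Ioo (0:ℝ) 1,
      (2*Real.pi)^2*(1/3)*(2*ρ₁^2-1)
          + ((2*Real.pi)^2*(2/27)*(2*ρ₁^2-1)^3) * (ρ₁^2*(1-ρ₁^2))⁻¹ = E₂ ρ₁ := by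
    intro ρ₁ h
    have h2 := hρ₂pos ρ₁ h
    have h3 := hρ₂sq ρ₁ h
    rw [hform ρ₁ h, hH]
    have hne1 : ρ₁ ≠ 0 := ne_of_gt h.1
    have hne2 : (1:ℝ) - ρ₁^2 ≠ 0 := by nlinarith [h.1, h.2]
    simp only [div_pow, mul_pow, h3]
    field_simp
    ring
  have hmem1 : Set.Ioo (0:ℝ) 1 ∈ nhdsWithin (1:ℝ) (Set.Iio 1) := by
    rw [mem_nhdsWithin]
    exact ⟨Set.Ioi 0, isOpen_Ioi, by norm_num, fun x hx => ⟨hx.1, hx.2⟩⟩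
  have hmem0 : Set.Ioo (0:ℝ) 1 ∈ nhdsWithin (0:ℝ) (Set.Ioi 0) := by
    rw [mem_nhdsWithin]
    exact ⟨Set.Iio 1, isOpen_Iio, by norm_num, fun x hx => ⟨hx.2, hx.1⟩⟩
  have c1 : Continuous (fun ρ₁ : ℝ => (2*Real.pi)^2*(1/3)*(2*ρ₁^2-1)) := by fun_prop
  have c2 : Continuous (fun ρ₁ : ℝ => (2*Real.pi)^2*(2/27)*(2*ρ₁^2-1)^3) := by fun_prop
  have c3 : Continuous (fun ρ₁ : ℝ => ρ₁^2*(1-ρ₁^2)) := by fun_prop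
  refine ⟨hform, ?_, ?_⟩
  · -- ρ₁ → 1⁻
    have hev : ∀ᶠ ρ₁ in nhdsWithin (1:ℝ) (Set.Iio 1),
        (2*Real.pi)^2*(1/3)*(2*ρ₁^2-1)
          + ((2*Real.pi)^2*(2/27)*(2*ρ₁^2-1)^3) * (ρ₁^2*(1-ρ₁^2))⁻¹ = E₂ ρ₁ := by
      filter_upwards [hmem1] with ρ₁ h using hform2 ρ₁ h
    refine Tendsto.congr' hev ?_
    refine Tendsto.add_atTop (C := (2*Real.pi)^2*(1/3)*(2*1^2-1)) ?_ ?_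
    · exact (c1.tendsto 1).mono_left nhdsWithin_le_nhds
    · refine Tendsto.pos_mul_atTop (C := (2*Real.pi)^2*(2/27)*(2*(1:ℝ)^2-1)^3) (by positivity) ?_ ?_
      · exact (c2.tendsto 1).mono_left nhdsWithin_le_nhds
      · apply Tendsto.inv_tendsto_nhdsGT_zero
        rw [tendsto_nhdsWithin_iff]
        constructor
        · simpa using (c3.tendsto 1).mono_left nhdsWithin_le_nhds
        · filter_upwards [hmem1] with x hx
          show (0:ℝ) < x^2*(1-x^2)
          have h1 : (0:ℝ) < 1 - x^2 := by nlinarith [hx.1, hx.2]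
          exact mul_pos (pow_pos hx.1 2) h1
  · -- ρ₁ → 0⁺
    have hev : ∀ᶠ ρ₁ in nhdsWithin (0:ℝ) (Set.Ioi 0),
        (2*Real.pi)^2*(1/3)*(2*ρ₁^2-1)
          + ((2*Real.pi)^2*(2/27)*(2*ρ₁^2-1)^3) * (ρ₁^2*(1-ρ₁^2))⁻¹ = E₂ ρ₁ := by
      filter_upwards [hmem0] with ρ₁ h using hform2 ρ₁ h
    refine Tendsto.congr' hev ?_
    refine Tendsto.add_atBot (C := (2*Real.pi)^2*(1/3)*(2*(0:ℝ)^2-1)) ?_ ?_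
    · exact (c1.tendsto 0).mono_left nhdsWithin_le_nhds
    · refine Tendsto.neg_mul_atTop (C := (2*Real.pi)^2*(2/27)*(2*(0:ℝ)^2-1)^3)
        (by nlinarith [sq_nonneg Real.pi]) ?_ ?_
      · exact (c2.tendsto 0).mono_left nhdsWithin_le_nhds
      · apply Tendsto.inv_tendsto_nhdsGT_zero
        rw [tendsto_nhdsWithin_iff]
        constructor
        · simpa using (c3.tendsto 0).mono_left nhdsWithin_le_nhds
        · filter_upwards [hmem0] with x hx
          show (0:ℝ) < x^2*(1-x^2)
          have h1 : (0:ℝ) < 1 - x^2 := by nlinarith [hx.1, hx.2]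
          exact mul_pos (pow_pos hx.1 2) h1
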